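/- arXiv:1401.2978 — 2 statements merged into one kernel-verified Lean document; each statement's English description precedes it below -/
import Mathlib

section
/- If the set of ordered set partitions of [n] solving a scheduling problem S satisfies the partitionability conditions (closure under directed refinement and existence of unique coarsest elements as above), then the h*-vector of χ_S is non-negative: writing χ_S(k) = Σ_{i=1}^n h*_i · C(k+n−i, n), all h*_i ≥ 0. -/
/-- A scheduling problem on `n` items: a boolean formula over atoms `x i ≤ x j`. -/
inductive SForm (n : ℕ) : Type
  | atom (i j : Fin n) : SForm n
  | not (φ : SForm n) : SForm n
  | and (φ ψ : SForm n) : SForm n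
  | or (φ ψ : SForm n) : SForm n

/-- Evaluation of a scheduling formula at an assignment `a : Fin n → ℕ`. -/
def SForm.eval {n : ℕ} : SForm n → (Fin n → ℕ) → Bool
  | .atom i j, a => decide (a i ≤ a j)
  | .not φ, a => !(φ.eval a)
  | .and φ ψ, a => φ.eval a && ψ.eval a
  | .or φ ψ, a => φ.eval a || ψ.eval a

/-- `schedCount S k` = number of vectors `a ∈ [k]^n` (entries in `{1,…,k}`) solving `S`. -/
def schedCount {n : ℕ} (S : SForm n) (k : ℕ) : ℕ :=
  ((Fintype.piFinset fun _ : Fin n => Finset.Icc 1 k).filter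
    fun a => S.eval a = true).card

/-- An ordered set partition of `[n]`. -/
structure OSP (n : ℕ) where
  blocks : List (Finset (Fin n))
  nonempty : ∀ B ∈ blocks, B.Nonempty
  pairwiseDisjoint : blocks.Pairwise Disjoint
  cover : ∀ i : Fin n, ∃ B ∈ blocks, i ∈ B

/-- Number of blocks of an ordered set partition. -/
def OSP.length {n : ℕ} (Φ : OSP n) : ℕ := Φ.blocks.length

/-- `Φ.delta a` : the order class of `a` is `Φ`, i.e. coordinates of `a` are constant on each
block and ordered according to the block order. -/
def OSP.delta {n : ℕ} (Φ : OSP n) (a : Fin n → ℕ) : Prop :=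
  ∃ idx : Fin n → Fin Φ.blocks.length,
    (∀ i, i ∈ Φ.blocks.get (idx i)) ∧
    (∀ i j, a i ≤ a j ↔ (idx i : ℕ) ≤ (idx j : ℕ))

/-- An ordered set partition `Φ` solves `S` if every vector with order class `Φ` satisfies `S`. -/
def OSP.solves {n : ℕ} (Φ : OSP n) (S : SForm n) : Prop :=
  ∀ a : Fin n → ℕ, Φ.delta a → S.eval a = true

/-- `Ψ.refines Φ` : `Φ` is obtained from `Ψ` by merging consecutive blocks. -/
def OSP.refines {n : ℕ} (Ψ Φ : OSP n) : Prop :=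
  ∃ g : Fin Ψ.blocks.length → Fin Φ.blocks.length,
    Monotone g ∧
    ∀ l : Fin Φ.blocks.length,
      Φ.blocks.get l =
        (Finset.univ.filter fun m => g m = l).biUnion fun m => Ψ.blocks.get m

/-- One step of directed refinement: `F` is obtained from `C` by splitting one block into two
adjacent blocks, every element of the first being less than every element of the second. -/
def dirCov {n : ℕ} (C F : OSP n) : Prop :=
  ∃ (L R : List (Finset (Fin n))) (B₁ B₂ : Finset (Fin n)),
    F.blocks = L ++ B₁ :: B₂ :: R ∧
    C.blocks = L ++ (B₁ ∪ B₂) :: R ∧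
    ∀ x ∈ B₁, ∀ y ∈ B₂, x < y

/-- `dirRef C F` : `F` is a directed refinement of `C` (`C ⪯ F`). -/
def dirRef {n : ℕ} : OSP n → OSP n → Prop := Relation.ReflTransGen dirCov
section Aux
open Finset

variable {n : ℕ}

theorem sform_zero (S : SForm 0) : False := by
  induction S with
  | atom i j => exact i.elim0
  | not φ ih => exact ih
  | and φ ψ ih₁ ih₂ => exact ih₁
  | or φ ψ ih₁ ih₂ => exact ih₁

theorem OSP.ext' {Φ Ψ : OSP n} (h : Φ.blocks = Ψ.blocks) : Φ = Ψ := by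
  cases Φ; cases Ψ; simpa using h

theorem OSP.mem_unique (Φ : OSP n) {i : Fin n} {l m : Fin Φ.blocks.length}
    (hl : i ∈ Φ.blocks.get l) (hm : i ∈ Φ.blocks.get m) : l = m := by
  by_contra hne
  rcases lt_or_gt_of_ne hne with h | h
  · exact Finset.disjoint_left.mp (List.pairwise_iff_get.1 Φ.pairwiseDisjoint l m h) hl hm
  · exact Finset.disjoint_left.mp (List.pairwise_iff_get.1 Φ.pairwiseDisjoint m l h) hm hl

theorem OSP.exists_idx (Φ : OSP n) (i : Fin n) : ∃ l : Fin Φ.blocks.length, i ∈ Φ.blocks.get l := by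
  obtain ⟨B, hB, hi⟩ := Φ.cover i
  obtain ⟨l, hl⟩ := List.get_of_mem hB
  exact ⟨l, hl ▸ hi⟩

noncomputable def OSP.idx (Φ : OSP n) (i : Fin n) : Fin Φ.blocks.length :=
  (Φ.exists_idx i).choose

theorem OSP.idx_mem (Φ : OSP n) (i : Fin n) : i ∈ Φ.blocks.get (Φ.idx i) :=
  (Φ.exists_idx i).choose_spec

theorem OSP.idx_eq (Φ : OSP n) {i : Fin n} {l : Fin Φ.blocks.length}
    (h : i ∈ Φ.blocks.get l) : Φ.idx i = l :=
  Φ.mem_unique (Φ.idx_mem i) h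

theorem OSP.idx_surjective (Φ : OSP n) : Function.Surjective Φ.idx := by
  intro l
  obtain ⟨i, hi⟩ := Φ.nonempty _ (Φ.blocks.get_mem l)
  exact ⟨i, Φ.idx_eq hi⟩

theorem OSP.length_le (Φ : OSP n) : Φ.blocks.length ≤ n := by
  simpa using Fintype.card_le_of_surjective Φ.idx Φ.idx_surjective

theorem OSP.length_pos (Φ : OSP n) (hn : 0 < n) : 0 < Φ.blocks.length :=
  (Φ.idx ⟨0, hn⟩).pos

end Aux
section Aux2
open Finset

variable {n : ℕ}

/-- Lower gap bound from consecutive steps. -/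
theorem gap_lower {m : ℕ} {f : Fin m → ℕ}
    (hf : ∀ t t' : Fin m, (t : ℕ) + 1 = (t' : ℕ) → f t + 1 ≤ f t') :
    ∀ t t' : Fin m, t ≤ t' → f t + ((t' : ℕ) - (t : ℕ)) ≤ f t' := by
  have H : ∀ g : ℕ, ∀ t t' : Fin m, (t : ℕ) + g = (t' : ℕ) → f t + g ≤ f t' := by
    intro g
    induction g with
    | zero => intro t t' h; have : t = t' := Fin.ext (by omega); simp [this]
    | succ g ih =>
      intro t t' h
      have h2 : (t : ℕ) + g < m := by omega
      have := ih t ⟨(t : ℕ) + g, h2⟩ (by simp)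
      have := hf ⟨(t : ℕ) + g, h2⟩ t' (by simp; omega)
      omega
  intro t t' h
  exact H _ t t' (by have := Fin.le_iff_val_le_val.mp h; omega)

/-- Upper gap bound from consecutive steps. -/
theorem gap_upper {m : ℕ} {f : Fin m → ℕ}
    (hf : ∀ t t' : Fin m, (t : ℕ) + 1 = (t' : ℕ) → f t' ≤ f t + 1) :
    ∀ t t' : Fin m, t ≤ t' → f t' ≤ f t + ((t' : ℕ) - (t : ℕ)) := by
  have H : ∀ g : ℕ, ∀ t t' : Fin m, (t : ℕ) + g = (t' : ℕ) → f t' ≤ f t + g := by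
    intro g
    induction g with
    | zero => intro t t' h; have : t = t' := Fin.ext (by omega); simp [this]
    | succ g ih =>
      intro t t' h
      have h2 : (t : ℕ) + g < m := by omega
      have := ih t ⟨(t : ℕ) + g, h2⟩ (by simp)
      have := hf ⟨(t : ℕ) + g, h2⟩ t' (by simp; omega)
      omega
  intro t t' h
  exact H _ t t' (by have := Fin.le_iff_val_le_val.mp h; omega)

/-- A monotone surjective map between `Fin`s has consecutive steps of size at most 1. -/
theorem mono_surj_step {m l : ℕ} {f : Fin m → Fin l} (hm : Monotone f)
    (hs : Function.Surjective f) :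
    ∀ t t' : Fin m, (t : ℕ) + 1 = (t' : ℕ) → (f t' : ℕ) ≤ (f t : ℕ) + 1 := by
  intro t t' ht
  by_contra hlt
  push_neg at hlt
  have h1 : (f t : ℕ) + 1 < l := lt_trans hlt (f t').isLt
  obtain ⟨r, hr⟩ := hs ⟨(f t : ℕ) + 1, h1⟩
  have h2 : f t < f r := by rw [hr]; exact Fin.lt_iff_val_lt_val.mpr (by simp)
  have h3 : f r < f t' := by rw [hr]; exact Fin.lt_iff_val_lt_val.mpr (by simpa using hlt)
  have h4 : t < r := by by_contra h; push_neg at h; exact absurd (hm h) (not_le.mpr h2)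
  have h5 : r < t' := by by_contra h; push_neg at h; exact absurd (hm h) (not_le.mpr h3)
  have := Fin.lt_iff_val_lt_val.mp h4
  have := Fin.lt_iff_val_lt_val.mp h5
  omega

/-- A monotone surjective map between `Fin`s attains `0` at `0`. -/
theorem mono_surj_zero {m l : ℕ} {f : Fin m → Fin l} (hm : Monotone f)
    (hs : Function.Surjective f) (t0 : Fin m) (h0 : (t0 : ℕ) = 0) : (f t0 : ℕ) = 0 := by
  obtain ⟨j, hj⟩ := Nat.exists_eq_add_of_le (Nat.zero_le (l - 1))
  rcases Nat.eq_zero_or_pos l with hl | hl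
  · exact absurd (f t0).isLt (by omega)
  obtain ⟨r, hr⟩ := hs ⟨0, hl⟩
  have : f t0 ≤ f r := hm (Fin.le_iff_val_le_val.mpr (by omega))
  rw [hr] at this
  simpa using Fin.le_iff_val_le_val.mp this

theorem mono_surj_le {m l : ℕ} {f : Fin m → Fin l} (hm : Monotone f)
    (hs : Function.Surjective f) (t : Fin m) : (f t : ℕ) ≤ (t : ℕ) := by
  have h0 : 0 < m := t.pos
  have := gap_upper (f := fun t => (f t : ℕ)) (mono_surj_step hm hs) ⟨0, h0⟩ t
    (Fin.le_iff_val_le_val.mpr (by simp))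
  have hz := mono_surj_zero hm hs ⟨0, h0⟩ rfl
  simp at this hz
  omega

theorem mono_surj_last {m l : ℕ} {f : Fin m → Fin l} (hm : Monotone f)
    (hs : Function.Surjective f) (t : Fin m) : l ≤ (f t : ℕ) + 1 + ((m - 1) - (t : ℕ)) := by
  have h0 : 0 < m := t.pos
  have hl : 0 < l := (f t).pos
  obtain ⟨r, hr⟩ := hs ⟨l - 1, by omega⟩
  have hlast : (t : ℕ) ≤ m - 1 := by have := t.isLt; omega
  have hT : m - 1 < m := by omega
  have h1 : f t ≤ f ⟨m - 1, hT⟩ ⊔ f t := le_sup_right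
  have h2 : (f ⟨m - 1, hT⟩ : ℕ) = l - 1 := by
    have : f r ≤ f ⟨m - 1, hT⟩ := hm (Fin.le_iff_val_le_val.mpr (by simp; omega))
    have h3 := Fin.le_iff_val_le_val.mp this
    rw [hr] at h3
    have := (f ⟨m - 1, hT⟩).isLt
    simp at h3 ⊢
    omega
  have := gap_upper (f := fun t => (f t : ℕ)) (mono_surj_step hm hs) t ⟨m - 1, hT⟩
    (Fin.le_iff_val_le_val.mpr (by simp; omega))
  simp [h2] at this
  omega

/-- A strictly monotone `ℕ`-valued map grows at least linearly. -/
theorem strict_gap {m : ℕ} {f : Fin m → ℕ} (hf : StrictMono f) :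
    ∀ t t' : Fin m, t ≤ t' → f t + ((t' : ℕ) - (t : ℕ)) ≤ f t' := by
  refine gap_lower (fun t t' h => ?_)
  exact hf (Fin.lt_iff_val_lt_val.mpr (by omega))

end Aux2
section Aux3
open Finset

variable {n : ℕ}

/-- Compatibility of an OSP with a vector: strictly increasing across blocks,
weakly increasing (in index order) within blocks. -/
def Compat (Ψ : OSP n) (a : Fin n → ℕ) : Prop :=
  ∀ l m : Fin Ψ.blocks.length, ∀ i ∈ Ψ.blocks.get l, ∀ j ∈ Ψ.blocks.get m,
    ((l : ℕ) < (m : ℕ) → a i < a j) ∧ (l = m → i ≤ j → a i ≤ a j)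

/-- The order class of a vector, as an ordered set partition. -/
def ospOf (a : Fin n → ℕ) : OSP n where
  blocks := ((Finset.univ.image a).sort (· ≤ ·)).map
    fun v => Finset.univ.filter fun i => a i = v
  nonempty := by
    intro B hB
    simp only [List.mem_map] at hB
    obtain ⟨v, hv, rfl⟩ := hB
    rw [Finset.mem_sort] at hv
    obtain ⟨i, -, rfl⟩ := Finset.mem_image.mp hv
    exact ⟨i, by simp⟩
  pairwiseDisjoint := by
    have hs : ((Finset.univ.image a).sort (· ≤ ·)).Pairwise (· < ·) :=
      (Finset.sortedLT_sort _).pairwise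
    refine List.Pairwise.map _ (fun {v w} hvw => ?_) hs
    rw [Finset.disjoint_left]
    intro i hi hi'
    simp only [Finset.mem_filter] at hi hi'
    omega
  cover := by
    intro i
    refine ⟨Finset.univ.filter fun j => a j = a i, ?_, by simp⟩
    simp only [List.mem_map]
    exact ⟨a i, by rw [Finset.mem_sort]; exact Finset.mem_image_of_mem a (mem_univ i), rfl⟩

theorem ospOf_blocks_length (a : Fin n → ℕ) :
    (ospOf a).blocks.length = ((Finset.univ.image a).sort (· ≤ ·)).length := by
  simp [ospOf]

theorem ospOf_get (a : Fin n → ℕ) (l : Fin (ospOf a).blocks.length) :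
    (ospOf a).blocks.get l = Finset.univ.filter
      (fun i => a i = ((Finset.univ.image a).sort (· ≤ ·)).get
        ⟨l, by simpa [ospOf] using l.isLt⟩) := by
  rw [List.get_eq_getElem]
  simp [ospOf, List.getElem_map]

theorem delta_ospOf (a : Fin n → ℕ) : (ospOf a).delta a := by
  set L := (Finset.univ.image a).sort (· ≤ ·) with hL
  have hmem : ∀ i, a i ∈ L := fun i => by
    rw [hL, Finset.mem_sort]; exact Finset.mem_image_of_mem a (mem_univ i)
  have hlen : (ospOf a).blocks.length = L.length := ospOf_blocks_length a
  have hsm : StrictMono L.get := (Finset.sortedLT_sort _).strictMono_get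
  refine ⟨fun i => ⟨L.idxOf (a i), by rw [hlen]; exact List.idxOf_lt_length_iff.mpr (hmem i)⟩,
    fun i => ?_, fun i j => ?_⟩
  · rw [ospOf_get]
    simp only [Finset.mem_filter, Finset.mem_univ, true_and]
    exact (List.idxOf_get _).symm
  · have h1 : L.get ⟨L.idxOf (a i), List.idxOf_lt_length_iff.mpr (hmem i)⟩ = a i :=
      List.idxOf_get _
    have h2 : L.get ⟨L.idxOf (a j), List.idxOf_lt_length_iff.mpr (hmem j)⟩ = a j :=
      List.idxOf_get _
    constructor
    · intro hij
      have h3 : (⟨L.idxOf (a i), List.idxOf_lt_length_iff.mpr (hmem i)⟩ : Fin L.length) ≤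
          ⟨L.idxOf (a j), List.idxOf_lt_length_iff.mpr (hmem j)⟩ :=
        hsm.le_iff_le.mp (by rw [h1, h2]; exact hij)
      simpa using Fin.le_iff_val_le_val.mp h3
    · intro hij
      rw [← h1, ← h2]
      exact hsm.le_iff_le.mpr (Fin.le_iff_val_le_val.mpr (by simpa using hij))

/-- Uniqueness: there is at most one OSP that is the order class of `a`. -/
theorem delta_unique {Φ Φ' : OSP n} {a : Fin n → ℕ} (h : Φ.delta a) (h' : Φ'.delta a) :
    Φ = Φ' := by
  obtain ⟨f, hf, hfc⟩ := h
  obtain ⟨g, hg, hgc⟩ := h'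
  -- f and g are surjective
  have hfs : Function.Surjective f := by
    intro l
    obtain ⟨i, hi⟩ := Φ.nonempty _ (Φ.blocks.get_mem l)
    exact ⟨i, Φ.mem_unique (hf i) hi⟩
  have hgs : Function.Surjective g := by
    intro l
    obtain ⟨i, hi⟩ := Φ'.nonempty _ (Φ'.blocks.get_mem l)
    exact ⟨i, Φ'.mem_unique (hg i) hi⟩
  -- relating f and g
  have key : ∀ i j : Fin n, ((f i : ℕ) ≤ (f j : ℕ)) ↔ ((g i : ℕ) ≤ (g j : ℕ)) := by
    intro i j; rw [← hfc, hgc]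
  -- g i as a function of f i
  have hconst : ∀ i j : Fin n, f i = f j → g i = g j := by
    intro i j hij
    have h1 : (g i : ℕ) ≤ (g j : ℕ) := (key i j).mp (by rw [hij])
    have h2 : (g j : ℕ) ≤ (g i : ℕ) := (key j i).mp (by rw [hij])
    exact Fin.ext (le_antisymm h1 h2)
  set F : Fin Φ.blocks.length → Fin Φ'.blocks.length :=
    fun l => g (Function.surjInv hfs l) with hF
  have hFf : ∀ i, F (f i) = g i := by
    intro i
    exact hconst _ i (Function.surjInv_eq hfs (f i))
  have hFs : Function.Surjective F := by
    intro l
    obtain ⟨i, hi⟩ := hgs l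
    exact ⟨f i, by rw [hFf]; exact hi⟩
  have hFm : Monotone F := by
    intro l m hlm
    obtain ⟨i, hi⟩ := hfs l
    obtain ⟨j, hj⟩ := hfs m
    rw [← hi, ← hj, hFf, hFf]
    rw [← hi, ← hj] at hlm
    exact Fin.le_iff_val_le_val.mpr ((key i j).mp (Fin.le_iff_val_le_val.mp hlm))
  have hFi : Function.Injective F := by
    intro l m hlm
    obtain ⟨i, hi⟩ := hfs l
    obtain ⟨j, hj⟩ := hfs m
    rw [← hi, ← hj, hFf, hFf] at hlm
    rw [← hi, ← hj]
    have h1 : (f i : ℕ) ≤ (f j : ℕ) := (key i j).mpr (by rw [hlm])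
    have h2 : (f j : ℕ) ≤ (f i : ℕ) := (key j i).mpr (by rw [hlm])
    exact Fin.ext (le_antisymm h1 h2)
  have hlen : Φ.blocks.length = Φ'.blocks.length :=
    Fin.equiv_iff_eq.mp ⟨Equiv.ofBijective F ⟨hFi, hFs⟩⟩
  have hFid : ∀ l, (F l : ℕ) = (l : ℕ) := by
    intro l
    have h1 : (F l : ℕ) ≤ (l : ℕ) := mono_surj_le hFm hFs l
    have h2 : (l : ℕ) ≤ (F l : ℕ) := by
      have hsm : StrictMono F := hFm.strictMono_of_injective hFi
      have := gap_lower (f := fun t => (F t : ℕ))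
        (fun t t' h => hsm (Fin.lt_iff_val_lt_val.mpr (by omega))) ⟨0, l.pos⟩ l
        (Fin.le_iff_val_le_val.mpr (by simp))
      simp at this
      omega
    omega
  have hgf : ∀ i, (g i : ℕ) = (f i : ℕ) := by
    intro i; rw [← hFf i]; exact hFid (f i)
  -- blocks are fibers
  have hblock : ∀ l : Fin Φ.blocks.length,
      Φ.blocks.get l = Finset.univ.filter (fun i => (f i : ℕ) = (l : ℕ)) := by
    intro l
    ext i
    simp only [Finset.mem_filter, Finset.mem_univ, true_and]
    constructor
    · intro hi; rw [Φ.mem_unique (hf i) hi]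
    · intro hi
      have : f i = l := Fin.ext hi
      rw [← this]; exact hf i
  have hblock' : ∀ l : Fin Φ'.blocks.length,
      Φ'.blocks.get l = Finset.univ.filter (fun i => (g i : ℕ) = (l : ℕ)) := by
    intro l
    ext i
    simp only [Finset.mem_filter, Finset.mem_univ, true_and]
    constructor
    · intro hi; rw [Φ'.mem_unique (hg i) hi]
    · intro hi
      have : g i = l := Fin.ext hi
      rw [← this]; exact hg i
  refine OSP.ext' (List.ext_get hlen fun p h1 h2 => ?_)
  rw [hblock ⟨p, h1⟩, hblock' ⟨p, h2⟩]
  ext i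
  simp [hgf i]

theorem eval_congr (S : SForm n) {a b : Fin n → ℕ} (h : ∀ i j, a i ≤ a j ↔ b i ≤ b j) :
    S.eval a = S.eval b := by
  induction S with
  | atom i j => simp [SForm.eval, h i j]
  | not φ ih => simp [SForm.eval, ih]
  | and φ ψ ih₁ ih₂ => simp [SForm.eval, ih₁, ih₂]
  | or φ ψ ih₁ ih₂ => simp [SForm.eval, ih₁, ih₂]

end Aux3
section Aux4
open Finset

variable {n : ℕ}

theorem compat_ospOf (a : Fin n → ℕ) : Compat (ospOf a) a := by
  set L := (Finset.univ.image a).sort (· ≤ ·) with hLdef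
  have hsm : StrictMono L.get := (Finset.sortedLT_sort _).strictMono_get
  intro l m i hi j hj
  rw [ospOf_get] at hi hj
  simp only [Finset.mem_filter, Finset.mem_univ, true_and] at hi hj
  constructor
  · intro hlm
    rw [hi, hj]
    exact hsm (Fin.lt_iff_val_lt_val.mpr (by simpa using hlm))
  · intro hlm _
    subst hlm
    rw [hi, hj]

theorem dirCov_length {C F : OSP n} (h : dirCov C F) :
    F.blocks.length = C.blocks.length + 1 := by
  obtain ⟨L, R, B₁, B₂, hF, hC, -⟩ := h
  simp [hF, hC]
  omega

theorem dirRef_length_le {C F : OSP n} (h : dirRef C F) :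
    C.blocks.length ≤ F.blocks.length := by
  induction h with
  | refl => exact le_refl _
  | tail h₁ h₂ ih => rw [dirCov_length h₂]; omega

theorem dirRef_antisymm {C F : OSP n} (h : dirRef C F)
    (hlen : F.blocks.length ≤ C.blocks.length) : C = F := by
  rcases (Relation.reflTransGen_iff_eq_or_transGen.mp h) with rfl | htg
  · rfl
  · obtain ⟨c, hc1, hc2⟩ := Relation.TransGen.tail'_iff.mp htg
    have := dirRef_length_le hc1
    have := dirCov_length hc2
    omega

/-- getElem lemmas for `L ++ X :: R` decompositions. -/
theorem getElem_LXR_left {α : Type*} {L R : List α} {X : α} {q : ℕ} (h : q < L.length)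
    {h' : q < (L ++ X :: R).length} : (L ++ X :: R)[q] = L[q] :=
  List.getElem_append_left h

theorem getElem_LXR_mid {α : Type*} {L R : List α} {X : α} {q : ℕ} (h : q = L.length)
    {h' : q < (L ++ X :: R).length} : (L ++ X :: R)[q] = X := by
  subst h
  rw [List.getElem_append_right (le_refl _)]
  simp

theorem getElem_LXR_right {α : Type*} {L R : List α} {X : α} {q : ℕ} (h : L.length < q)
    {h' : q < (L ++ X :: R).length}
    (h2 : q - L.length - 1 < R.length) : (L ++ X :: R)[q] = R[q - L.length - 1] := by
  rw [List.getElem_append_right (le_of_lt h)]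
  rw [List.getElem_cons]
  simp only [show ¬(q - L.length = 0) from by omega, dif_neg, not_false_iff]

theorem length_LXR {α : Type*} (L R : List α) (X : α) :
    (L ++ X :: R).length = L.length + 1 + R.length := by simp; omega

/-- Transport of compatibility along one directed-refinement step (from fine to coarse). -/
theorem compat_of_dirCov {C F : OSP n} {a : Fin n → ℕ} (h : dirCov C F)
    (hc : Compat F a) : Compat C a := by
  obtain ⟨L, R, B₁, B₂, hF, hC, hlt⟩ := h
  set p := L.length with hp
  have hlenC : C.blocks.length = p + 1 + R.length := by rw [hC]; exact length_LXR L R _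
  have hlenF : F.blocks.length = p + 2 + R.length := by
    rw [hF, length_LXR]
    simp only [List.length_cons]
    omega
  -- map a position of C with a member to a position of F
  have key : ∀ (q : Fin C.blocks.length) (i : Fin n), i ∈ C.blocks.get q →
      ∃ q' : Fin F.blocks.length, i ∈ F.blocks.get q' ∧
        (((q : ℕ) < p ∧ (q' : ℕ) = q) ∨
         ((q : ℕ) = p ∧ ((q' : ℕ) = p ∨ (q' : ℕ) = p + 1)) ∨
         (p < (q : ℕ) ∧ (q' : ℕ) = (q : ℕ) + 1)) := by
    intro q i hi
    rcases lt_trichotomy (q : ℕ) p with hq | hq | hq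
    · refine ⟨⟨q, by omega⟩, ?_, Or.inl ⟨hq, rfl⟩⟩
      have e1 : C.blocks.get q = L[(q : ℕ)] := by
        simp only [List.get_eq_getElem, hC]
        exact getElem_LXR_left hq
      have e2 : F.blocks.get ⟨q, by omega⟩ = L[(q : ℕ)] := by
        simp only [List.get_eq_getElem, hF]
        exact getElem_LXR_left hq
      rw [e2, ← e1]; exact hi
    · have e1 : C.blocks.get q = B₁ ∪ B₂ := by
        simp only [List.get_eq_getElem, hC]
        exact getElem_LXR_mid hq
      rw [e1] at hi
      rcases Finset.mem_union.mp hi with hi1 | hi2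
      · refine ⟨⟨p, by omega⟩, ?_, Or.inr (Or.inl ⟨hq, Or.inl rfl⟩)⟩
        have e2 : F.blocks.get ⟨p, by omega⟩ = B₁ := by
          simp only [List.get_eq_getElem, hF]
          exact getElem_LXR_mid rfl
        rw [e2]; exact hi1
      · refine ⟨⟨p + 1, by omega⟩, ?_, Or.inr (Or.inl ⟨hq, Or.inr rfl⟩)⟩
        have e2 : F.blocks.get ⟨p + 1, by omega⟩ = B₂ := by
          simp only [List.get_eq_getElem, hF]
          rw [getElem_LXR_right (by omega) (by simp only [List.length_cons]; omega)]
          simp [hp]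
        rw [e2]; exact hi2
    · refine ⟨⟨(q : ℕ) + 1, by omega⟩, ?_, Or.inr (Or.inr ⟨hq, rfl⟩)⟩
      have hqlt : (q : ℕ) < p + 1 + R.length := by rw [← hlenC]; exact q.isLt
      have e1 : C.blocks.get q = R[(q : ℕ) - p - 1] := by
        simp only [List.get_eq_getElem, hC]
        exact getElem_LXR_right hq (by omega)
      have e2 : F.blocks.get ⟨(q : ℕ) + 1, by omega⟩ = R[(q : ℕ) - p - 1] := by
        simp only [List.get_eq_getElem, hF]
        rw [getElem_LXR_right (by omega) (by simp only [List.length_cons]; omega)]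
        have : (q : ℕ) + 1 - p - 1 = ((q : ℕ) - p - 1) + 1 := by omega
        simp only [← hp, this, List.getElem_cons_succ]
      rw [e2, ← e1]; exact hi
  intro l m i hi j hj
  obtain ⟨l', hi', hl⟩ := key l i hi
  obtain ⟨m', hj', hm⟩ := key m j hj
  constructor
  · intro hlm
    have hlt' : (l' : ℕ) < (m' : ℕ) := by omega
    exact (hc l' m' i hi' j hj').1 hlt'
  · intro hlm hij
    subst hlm
    rcases Nat.lt_trichotomy (l' : ℕ) (m' : ℕ) with h1 | h1 | h1
    · exact le_of_lt ((hc l' m' i hi' j hj').1 h1)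
    · exact (hc l' m' i hi' j hj').2 (Fin.ext h1) hij
    · -- only possible if l' = p+1, m' = p, i.e. i ∈ B₂, j ∈ B₁
      exfalso
      have hl' : (l' : ℕ) = p + 1 ∧ (m' : ℕ) = p := by omega
      have hiB₂ : i ∈ B₂ := by
        have e2 : F.blocks.get l' = B₂ := by
          simp only [List.get_eq_getElem, hF]
          rw [getElem_LXR_right (by omega) (by simp only [List.length_cons]; omega)]
          simp [hl'.1, hp]
        rwa [e2] at hi'
      have hjB₁ : j ∈ B₁ := by
        have e2 : F.blocks.get m' = B₁ := by
          simp only [List.get_eq_getElem, hF]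
          exact getElem_LXR_mid hl'.2
        rwa [e2] at hj'
      have := hlt j hjB₁ i hiB₂
      exact absurd (lt_of_le_of_lt hij this) (lt_irrefl i)

/-- Transport of compatibility along directed refinement. -/
theorem compat_of_dirRef {C F : OSP n} {a : Fin n → ℕ} (h : dirRef C F)
    (hc : Compat F a) : Compat C a := by
  induction h using Relation.ReflTransGen.head_induction_on with
  | refl => exact hc
  | head h' _ ih => exact compat_of_dirCov h' ih

end Aux4
section Aux5
open Finset

variable {n : ℕ}

theorem dirRef_of_compat {a : Fin n → ℕ} :
    ∀ Ψ : OSP n, Compat Ψ a → dirRef Ψ (ospOf a) := by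
  suffices H : ∀ d, ∀ Ψ : OSP n, n - Ψ.blocks.length = d → Compat Ψ a → dirRef Ψ (ospOf a) by
    exact fun Ψ h => H _ Ψ rfl h
  intro d
  induction d using Nat.strong_induction_on with
  | _ d ih =>
  intro Ψ hd hc
  by_cases hconst : ∀ l : Fin Ψ.blocks.length, ∀ i ∈ Ψ.blocks.get l, ∀ j ∈ Ψ.blocks.get l,
      a i = a j
  · -- constant on blocks: Ψ is exactly the order class of a
    have hdelta : Ψ.delta a := by
      refine ⟨Ψ.idx, Ψ.idx_mem, fun i j => ?_⟩
      constructor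
      · intro hij
        by_contra h
        push_neg at h
        have := (hc (Ψ.idx j) (Ψ.idx i) j (Ψ.idx_mem j) i (Ψ.idx_mem i)).1 h
        omega
      · intro hij
        rcases Nat.lt_or_ge (Ψ.idx i : ℕ) (Ψ.idx j : ℕ) with h | h
        · exact le_of_lt ((hc _ _ i (Ψ.idx_mem i) j (Ψ.idx_mem j)).1 h)
        · have heq : Ψ.idx i = Ψ.idx j := Fin.ext (le_antisymm hij h)
          exact le_of_eq (hconst (Ψ.idx i) i (Ψ.idx_mem i) j
            (by rw [heq]; exact Ψ.idx_mem j))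
    rw [delta_unique hdelta (delta_ospOf a)]
    exact Relation.ReflTransGen.refl
  · -- split the first non-constant block
    push_neg at hconst
    obtain ⟨l, i₀, hi₀, j₀, hj₀, hne⟩ := hconst
    set B := Ψ.blocks.get l with hB
    have hBne : B.Nonempty := ⟨i₀, hi₀⟩
    have hBine : (B.image a).Nonempty := hBne.image a
    set v := (B.image a).min' hBine with hv
    have hvle : ∀ x ∈ B, v ≤ a x := fun x hx =>
      Finset.min'_le _ _ (Finset.mem_image_of_mem a hx)
    set B₁ := B.filter (fun x => a x = v) with hB₁
    set B₂ := B.filter (fun x => ¬ a x = v) with hB₂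
    have hB12 : B₁ ∪ B₂ = B := Finset.filter_union_filter_not_eq (p := fun x => a x = v) (s := B)
    have hdis : Disjoint B₁ B₂ := Finset.disjoint_filter_filter_not B B _
    have hB₁sub : B₁ ⊆ B := Finset.filter_subset _ _
    have hB₂sub : B₂ ⊆ B := Finset.filter_subset _ _
    have hB₁ne : B₁.Nonempty := by
      obtain ⟨x, hx, hxv⟩ := Finset.mem_image.mp ((B.image a).min'_mem hBine)
      exact ⟨x, Finset.mem_filter.mpr ⟨hx, hxv⟩⟩
    have hB₂ne : B₂.Nonempty := by
      rcases eq_or_ne (a i₀) v with h | h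
      · refine ⟨j₀, Finset.mem_filter.mpr ⟨hj₀, ?_⟩⟩
        intro hj; exact hne (by rw [h, hj])
      · exact ⟨i₀, Finset.mem_filter.mpr ⟨hi₀, h⟩⟩
    have horder : ∀ x ∈ B₁, ∀ y ∈ B₂, x < y := by
      intro x hx y hy
      rcases Finset.mem_filter.mp hx with ⟨hxB, hxv⟩
      rcases Finset.mem_filter.mp hy with ⟨hyB, hyv⟩
      by_contra h
      push_neg at h
      have := (hc l l y hyB x hxB).2 rfl h
      have := hvle y hyB
      omega
    have hdecomp : Ψ.blocks = Ψ.blocks.take l ++ B :: Ψ.blocks.drop ((l : ℕ) + 1) := by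
      conv_lhs => rw [← List.take_append_drop (l : ℕ) Ψ.blocks]
      congr 1
      rw [hB, List.get_eq_getElem]
      exact (List.getElem_cons_drop l.isLt).symm
    set T := Ψ.blocks.take (l : ℕ) with hT
    set D := Ψ.blocks.drop ((l : ℕ) + 1) with hD
    have hTlen : T.length = (l : ℕ) := by
      rw [hT, List.length_take]
      exact min_eq_left (le_of_lt l.isLt)
    set p := (l : ℕ) with hp
    have hΨlen : Ψ.blocks.length = p + 1 + D.length := by
      conv_lhs => rw [hdecomp]
      rw [length_LXR, hTlen]
    let F : OSP n := {
      blocks := T ++ B₁ :: B₂ :: D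
      nonempty := by
        intro X hX
        rcases List.mem_append.mp hX with hX | hX
        · exact Ψ.nonempty X (List.take_subset _ _ hX)
        · rcases List.mem_cons.mp hX with rfl | hX
          · exact hB₁ne
          rcases List.mem_cons.mp hX with rfl | hX
          · exact hB₂ne
          · exact Ψ.nonempty X (List.drop_subset _ _ hX)
      pairwiseDisjoint := by
        have hP := Ψ.pairwiseDisjoint
        rw [hdecomp, List.pairwise_append, List.pairwise_cons] at hP
        obtain ⟨hPT, ⟨hBD, hPD⟩, hcross⟩ := hP
        rw [List.pairwise_append, List.pairwise_cons, List.pairwise_cons]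
        refine ⟨hPT, ⟨?_, ?_, hPD⟩, ?_⟩
        · intro X hX
          rcases List.mem_cons.mp hX with rfl | hX
          · exact hdis
          · exact Finset.disjoint_of_subset_left hB₁sub (hBD X hX)
        · intro X hX
          exact Finset.disjoint_of_subset_left hB₂sub (hBD X hX)
        · intro x hx y hy
          rcases List.mem_cons.mp hy with rfl | hy
          · exact Finset.disjoint_of_subset_right hB₁sub
              (hcross x hx B (List.mem_cons_self))
          rcases List.mem_cons.mp hy with rfl | hy
          · exact Finset.disjoint_of_subset_right hB₂sub
              (hcross x hx B (List.mem_cons_self))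
          · exact hcross x hx y (List.mem_cons_of_mem _ hy)
      cover := by
        intro i
        obtain ⟨X, hX, hiX⟩ := Ψ.cover i
        rw [hdecomp] at hX
        rcases List.mem_append.mp hX with hX | hX
        · exact ⟨X, List.mem_append_left _ hX, hiX⟩
        rcases List.mem_cons.mp hX with rfl | hX
        · rw [← hB12] at hiX
          rcases Finset.mem_union.mp hiX with h | h
          · exact ⟨B₁, List.mem_append_right _ (List.mem_cons_self), h⟩
          · exact ⟨B₂, List.mem_append_right _
              (List.mem_cons_of_mem _ (List.mem_cons_self)), h⟩
        · exact ⟨X, List.mem_append_right _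
            (List.mem_cons_of_mem _ (List.mem_cons_of_mem _ hX)), hiX⟩ }
    have hFblocks : F.blocks = T ++ B₁ :: B₂ :: D := rfl
    have hcov : dirCov Ψ F := by
      refine ⟨T, D, B₁, B₂, hFblocks, ?_, horder⟩
      rw [hB12]
      exact hdecomp
    have hlF : F.blocks.length = Ψ.blocks.length + 1 := dirCov_length hcov
    have hFlen : F.blocks.length = p + 2 + D.length := by omega
    -- compatibility of the refined partition
    have hcF : Compat F a := by
      have key : ∀ (q' : Fin F.blocks.length) (i : Fin n), i ∈ F.blocks.get q' →
          ∃ q : Fin Ψ.blocks.length, i ∈ Ψ.blocks.get q ∧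
            (q : ℕ) = (if (q' : ℕ) ≤ p then (q' : ℕ) else (q' : ℕ) - 1) ∧
            ((q' : ℕ) = p → i ∈ B₁) ∧ ((q' : ℕ) = p + 1 → i ∈ B₂) := by
        intro q' i hi
        simp only [List.get_eq_getElem, hFblocks] at hi
        have hq'lt : (q' : ℕ) < p + 2 + D.length := by rw [← hFlen]; exact q'.isLt
        rcases lt_trichotomy (q' : ℕ) p with hq | hq | hq
        · refine ⟨⟨(q' : ℕ), by omega⟩, ?_, by simp [if_pos (le_of_lt hq)],
            fun h => absurd h (by omega), fun h => absurd h (by omega)⟩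
          rw [getElem_LXR_left (by omega)] at hi
          simp only [List.get_eq_getElem]
          have e : T[(q' : ℕ)]'(by omega) = Ψ.blocks[(q' : ℕ)]'(by omega) :=
            List.getElem_take
          rwa [e] at hi
        · rw [getElem_LXR_mid (by omega)] at hi
          refine ⟨l, ?_, by rw [if_pos (by omega)]; omega,
            fun _ => hi, fun h => absurd h (by omega)⟩
          rw [← hB]
          exact hB₁sub hi
        · rcases Nat.eq_or_lt_of_le (Nat.succ_le_of_lt hq) with hq1 | hq1
          · -- q' = p + 1
            rw [getElem_LXR_right (by omega) (by simp only [List.length_cons]; omega)] at hi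
            rw [List.getElem_cons] at hi
            rw [dif_pos (by omega : (q' : ℕ) - T.length - 1 = 0)] at hi
            refine ⟨l, ?_, by rw [if_neg (by omega)]; omega,
              fun h => absurd h (by omega), fun _ => hi⟩
            rw [← hB]
            exact hB₂sub hi
          · -- q' ≥ p + 2
            rw [getElem_LXR_right (by omega) (by simp only [List.length_cons]; omega)] at hi
            rw [List.getElem_cons] at hi
            rw [dif_neg (by omega : ¬((q' : ℕ) - T.length - 1 = 0))] at hi
            have hDlen : (q' : ℕ) - T.length - 1 - 1 < D.length := by omega
            refine ⟨⟨p + 1 + ((q' : ℕ) - T.length - 1 - 1), by omega⟩, ?_,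
              by show p + 1 + ((q' : ℕ) - T.length - 1 - 1) = _; rw [if_neg (by omega)]; omega,
              fun h => absurd h (by omega), fun h => absurd h (by omega)⟩
            have e : D[(q' : ℕ) - T.length - 1 - 1]'hDlen =
                Ψ.blocks[p + 1 + ((q' : ℕ) - T.length - 1 - 1)]'(by omega) :=
              List.getElem_drop
            simp only [List.get_eq_getElem]
            rwa [e] at hi
      intro l' m' i hi j hj
      obtain ⟨ql, hql, hqlv, hqlB₁, hqlB₂⟩ := key l' i hi
      obtain ⟨qm, hqm, hqmv, hqmB₁, hqmB₂⟩ := key m' j hj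
      constructor
      · intro hlm
        rcases Nat.lt_or_ge (ql : ℕ) (qm : ℕ) with h1 | h1
        · exact (hc ql qm i hql j hqm).1 h1
        · -- mapped positions equal: must be the split block
          have h4l : ((ql : ℕ) = (l' : ℕ) ∧ (l' : ℕ) ≤ p) ∨
              ((ql : ℕ) = (l' : ℕ) - 1 ∧ p < (l' : ℕ)) := by
            split_ifs at hqlv with h
            · exact Or.inl ⟨hqlv, h⟩
            · exact Or.inr ⟨hqlv, not_le.mp h⟩
          have h4m : ((qm : ℕ) = (m' : ℕ) ∧ (m' : ℕ) ≤ p) ∨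
              ((qm : ℕ) = (m' : ℕ) - 1 ∧ p < (m' : ℕ)) := by
            split_ifs at hqmv with h
            · exact Or.inl ⟨hqmv, h⟩
            · exact Or.inr ⟨hqmv, not_le.mp h⟩
          have hpos : (l' : ℕ) = p ∧ (m' : ℕ) = p + 1 := by
            rcases h4l with ⟨h, hp1⟩ | ⟨h, hp1⟩ <;> rcases h4m with ⟨h', hp2⟩ | ⟨h', hp2⟩ <;>
              omega
          have hi1 : i ∈ B₁ := hqlB₁ hpos.1
          have hj2 : j ∈ B₂ := hqmB₂ hpos.2
          rcases Finset.mem_filter.mp hi1 with ⟨-, hiv⟩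
          rcases Finset.mem_filter.mp hj2 with ⟨hjB, hjv⟩
          have := hvle j hjB
          omega
      · intro hlm hij
        subst hlm
        have : ql = qm := Fin.ext (hqlv.trans hqmv.symm)
        subst this
        exact (hc ql ql i hql j hqm).2 rfl hij
    have hlen_le : F.blocks.length ≤ n := F.length_le
    exact Relation.ReflTransGen.head hcov (ih (n - F.blocks.length) (by omega) F rfl hcF)

end Aux5
section Aux6
open Finset
open scoped Classical

variable {n : ℕ}

theorem card_strictMono_boxed (m N : ℕ) :
    ((Fintype.piFinset fun _ : Fin N => Finset.Icc 1 m).filter fun s => StrictMono s).card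
      = m.choose N := by
  classical
  have hcard : (Finset.Icc 1 m).card = m := by rw [Nat.card_Icc]; omega
  refine Eq.trans (Finset.card_bij' (fun s _ => Finset.univ.image s)
    (fun T hT => fun t => (T.orderEmbOfFin ((Finset.mem_powersetCard.mp hT).2) t))
    ?_ ?_ ?_ ?_ : _ = (Finset.powersetCard N (Finset.Icc 1 m)).card)
    (by rw [Finset.card_powersetCard, hcard])
  · intro s hs
    rw [Finset.mem_filter] at hs
    obtain ⟨hs1, hsm⟩ := hs
    rw [Fintype.mem_piFinset] at hs1
    rw [Finset.mem_powersetCard]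
    constructor
    · intro x hx
      obtain ⟨t, -, rfl⟩ := Finset.mem_image.mp hx
      exact hs1 t
    · rw [Finset.card_image_of_injective _ hsm.injective, Finset.card_univ, Fintype.card_fin]
  · intro T hT
    rw [Finset.mem_filter]
    constructor
    · rw [Fintype.mem_piFinset]
      intro t
      exact (Finset.mem_powersetCard.mp hT).1 (Finset.orderEmbOfFin_mem T _ t)
    · exact (T.orderEmbOfFin _).strictMono
  · intro s hs
    rw [Finset.mem_filter] at hs
    obtain ⟨-, hsm⟩ := hs
    funext t
    exact (congrFun (Finset.orderEmbOfFin_unique _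
      (fun x => Finset.mem_image_of_mem s (Finset.mem_univ x)) hsm) t).symm
  · intro T hT
    ext x
    simp only [Finset.mem_image, Finset.mem_univ, true_and]
    constructor
    · rintro ⟨t, rfl⟩
      exact Finset.orderEmbOfFin_mem T _ t
    · intro hx
      have hx' : x ∈ Set.range ⇑(T.orderEmbOfFin ((Finset.mem_powersetCard.mp hT).2)) := by
        rw [Finset.range_orderEmbOfFin]
        exact hx
      obtain ⟨t, ht⟩ := hx'
      exact ⟨t, ht⟩

theorem card_compat (Ψ : OSP n) (hn : 0 < n) (k : ℕ) :
    ((Fintype.piFinset fun _ : Fin n => Finset.Icc 1 k).filter fun a => Compat Ψ a).card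
      = (k + n - Ψ.blocks.length).choose n := by
  classical
  set ℓ := Ψ.blocks.length with hℓ
  have hℓpos : 0 < ℓ := Ψ.length_pos hn
  have hℓle : ℓ ≤ n := Ψ.length_le
  set key : Fin n → ℕ := fun i => (Ψ.idx i : ℕ) * n + (i : ℕ) with hkey
  have hkey_lt : ∀ i j : Fin n, (Ψ.idx i : ℕ) < (Ψ.idx j : ℕ) → key i < key j := by
    intro i j h
    have h1 : ((Ψ.idx i : ℕ) + 1) * n ≤ (Ψ.idx j : ℕ) * n := Nat.mul_le_mul_right n h
    have h2 : ((Ψ.idx i : ℕ) + 1) * n = (Ψ.idx i : ℕ) * n + n := by ring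
    have h3 : (i : ℕ) < n := i.isLt
    simp only [hkey]
    omega
  have hki : Function.Injective key := by
    intro i j h
    simp only [hkey] at h
    rcases lt_trichotomy (Ψ.idx i : ℕ) (Ψ.idx j : ℕ) with hlt | heq | hgt
    · exact absurd h (Nat.ne_of_lt (hkey_lt i j hlt))
    · rw [heq] at h
      exact Fin.ext (by omega)
    · exact absurd h.symm (Nat.ne_of_lt (hkey_lt j i hgt))
  set σ : Equiv.Perm (Fin n) := Tuple.sort key with hσdef
  have hσsm : StrictMono (fun t => key (σ t)) :=
    (Tuple.monotone_sort key).strictMono_of_injective (hki.comp σ.injective)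
  have hσ : ∀ t t' : Fin n, t ≤ t' ↔ key (σ t) ≤ key (σ t') := fun t t' =>
    hσsm.le_iff_le.symm
  set f : Fin n → Fin ℓ := fun t => Ψ.idx (σ t) with hf
  have hfmono : Monotone f := by
    intro t t' h
    by_contra hcon
    push_neg at hcon
    have h1 := hkey_lt _ _ (Fin.lt_iff_val_lt_val.mp hcon)
    have h2 := (hσ t t').mp h
    omega
  have hfsurj : Function.Surjective f := by
    intro l
    obtain ⟨i, hi⟩ := Ψ.idx_surjective l
    exact ⟨σ.symm i, by simp only [hf, Equiv.apply_symm_apply, hi]⟩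
  set D : Fin n → ℕ := fun t => (f t : ℕ) with hD
  have hDle : ∀ t, D t ≤ (t : ℕ) := mono_surj_le hfmono hfsurj
  have hDlt : ∀ t, D t < ℓ := fun t => (f t).isLt
  have hDgap : ∀ t t' : Fin n, t ≤ t' → D t' ≤ D t + ((t' : ℕ) - (t : ℕ)) :=
    gap_upper (mono_surj_step hfmono hfsurj)
  have hDlast : ∀ t, ℓ ≤ D t + 1 + ((n - 1) - (t : ℕ)) := mono_surj_last hfmono hfsurj
  have hDmono : ∀ t t' : Fin n, t ≤ t' → D t ≤ D t' := fun t t' h =>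
    Fin.le_iff_val_le_val.mp (hfmono h)
  have hfdef : ∀ t, f t = Ψ.idx (σ t) := fun t => by rw [hf]
  have hDdef : ∀ t, D t = (f t : ℕ) := fun t => by rw [hD]
  clear_value D f σ key
  -- the two directions of the bijection
  refine Eq.trans (Finset.card_bij'
    (fun a _ => fun t => a (σ t) + ((t : ℕ) - D t))
    (fun s _ => fun i => s (σ.symm i) + D (σ.symm i) - ((σ.symm i : Fin n) : ℕ))
    ?_ ?_ ?_ ?_)
    (card_strictMono_boxed (k + n - ℓ) n)
  · -- forward map lands in target
    intro a ha
    rw [Finset.mem_filter] at ha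
    obtain ⟨ha1, hca⟩ := ha
    rw [Fintype.mem_piFinset] at ha1
    have hbound : ∀ i, 1 ≤ a i ∧ a i ≤ k := fun i => Finset.mem_Icc.mp (ha1 i)
    rw [Finset.mem_filter]
    constructor
    · rw [Fintype.mem_piFinset]
      intro t
      rw [Finset.mem_Icc]
      have h1 := (hbound (σ t)).1
      have h2 := (hbound (σ t)).2
      have h3 := hDle t
      have h4 := hDlast t
      have h5 : (t : ℕ) < n := t.isLt
      constructor
      · omega
      · omega
    · intro t t' hlt
      dsimp only
      have hle : t ≤ t' := le_of_lt hlt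
      have hgap := hDgap t t' hle
      have h3 := hDle t
      have h3' := hDle t'
      have htv : (t : ℕ) < (t' : ℕ) := Fin.lt_iff_val_lt_val.mp hlt
      rcases lt_or_eq_of_le (hDmono t t' hle) with hD12 | hD12
      · have hstrict := (hca (f t) (f t')
          (σ t) (by rw [hfdef t]; exact Ψ.idx_mem (σ t))
          (σ t') (by rw [hfdef t']; exact Ψ.idx_mem (σ t'))).1
          (by rw [← hDdef t, ← hDdef t']; exact hD12)
        omega
      · have hfeq : f t = f t' := Fin.ext (by rw [← hDdef t, ← hDdef t']; exact hD12)
        have hσle : σ t ≤ σ t' := by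
          have h2 := (hσ t t').mp hle
          by_contra hcon
          push_neg at hcon
          have : key (σ t') < key (σ t) := by
            simp only [hkey]
            have := Fin.lt_iff_val_lt_val.mp hcon
            have heq2 : (Ψ.idx (σ t') : ℕ) = (Ψ.idx (σ t) : ℕ) := by
              rw [← hfdef t', ← hfdef t, hfeq]
            have heq3 : (Ψ.idx (σ t') : ℕ) * n = (Ψ.idx (σ t) : ℕ) * n := by rw [heq2]
            omega
          omega
        have hweak := (hca (f t) (f t')
          (σ t) (by rw [hfdef t]; exact Ψ.idx_mem (σ t))
          (σ t') (by rw [hfdef t']; exact Ψ.idx_mem (σ t'))).2 hfeq hσle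
        omega
  · -- backward map lands in source
    intro s hs
    rw [Finset.mem_filter] at hs
    obtain ⟨hs1, hsm⟩ := hs
    rw [Fintype.mem_piFinset] at hs1
    have hbound : ∀ t, 1 ≤ s t ∧ s t ≤ k + n - ℓ := fun t => Finset.mem_Icc.mp (hs1 t)
    have hgap := strict_gap hsm
    have hzero : ∀ t : Fin n, (t : ℕ) + 1 ≤ s t := by
      intro t
      have := hgap ⟨0, hn⟩ t (Fin.le_iff_val_le_val.mpr (by simp))
      have := (hbound ⟨0, hn⟩).1
      simp only [Fin.val_mk] at *
      omega
    have hlastb : ∀ t : Fin n, s t + ((n - 1) - (t : ℕ)) ≤ k + n - ℓ := by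
      intro t
      have hT : n - 1 < n := by omega
      have := hgap t ⟨n - 1, hT⟩ (Fin.le_iff_val_le_val.mpr (by simp only [Fin.val_mk]; omega))
      have := (hbound ⟨n - 1, hT⟩).2
      simp only [Fin.val_mk] at *
      omega
    rw [Finset.mem_filter]
    constructor
    · rw [Fintype.mem_piFinset]
      intro i
      rw [Finset.mem_Icc]
      set t := σ.symm i with ht
      have h1 := hzero t
      have h2 := hlastb t
      have h3 := hDle t
      have h4 := hDlast t
      have h5 : (t : ℕ) < n := t.isLt
      have h6 := hDlt t
      constructor
      · omega
      · omega
    · -- compatibility of the reconstructed vector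
      intro l m i hi j hj
      dsimp only
      set t := σ.symm i with ht
      set t' := σ.symm j with ht'
      clear_value t t'
      have hfi : f t = l := by
        rw [hf]
        simp only [ht, Equiv.apply_symm_apply]
        exact Ψ.idx_eq hi
      have hfj : f t' = m := by
        rw [hf]
        simp only [ht', Equiv.apply_symm_apply]
        exact Ψ.idx_eq hj
      have h1 := hzero t
      have h1' := hzero t'
      have h3 := hDle t
      have h3' := hDle t'
      constructor
      · intro hlm
        have hDlt' : D t < D t' := by
          rw [hD]
          simp only [hfi, hfj]
          exact hlm
        have httv : t < t' := by
          by_contra hcon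
          push_neg at hcon
          have := hDmono t' t hcon
          omega
        have := hgap t t' (le_of_lt httv)
        have htv := Fin.lt_iff_val_lt_val.mp httv
        omega
      · intro hlm hij
        rcases eq_or_lt_of_le hij with rfl | hij'
        · rw [show t = t' from by rw [ht, ht']]
        · have hDeq : D t = D t' := by
            rw [hD]
            simp only [hfi, hfj, hlm]
          have httv : t < t' := by
            by_contra hcon
            push_neg at hcon
            have hk2 := (hσ t' t).mp hcon
            have : key i < key j := by
              simp only [hkey]
              have hvij := Fin.lt_iff_val_lt_val.mp hij'
              have heq2 : (Ψ.idx i : ℕ) = (Ψ.idx j : ℕ) := by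
                rw [Ψ.idx_eq hi, Ψ.idx_eq hj, hlm]
              have heq3 : (Ψ.idx i : ℕ) * n = (Ψ.idx j : ℕ) * n := by rw [heq2]
              omega
            have hi' : σ t = i := by rw [ht]; exact σ.apply_symm_apply i
            have hj' : σ t' = j := by rw [ht']; exact σ.apply_symm_apply j
            rw [hi', hj'] at hk2
            omega
          have := hgap t t' (le_of_lt httv)
          have htv := Fin.lt_iff_val_lt_val.mp httv
          omega
  · -- left inverse
    intro a ha
    funext i
    dsimp only
    rw [Finset.mem_filter] at ha
    simp only [Equiv.apply_symm_apply]
    have h3 := hDle (σ.symm i)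
    omega
  · -- right inverse
    intro s hs
    rw [Finset.mem_filter] at hs
    obtain ⟨hs1, hsm⟩ := hs
    rw [Fintype.mem_piFinset] at hs1
    have hzero : ∀ t : Fin n, (t : ℕ) + 1 ≤ s t := by
      intro t
      have := strict_gap hsm ⟨0, hn⟩ t (Fin.le_iff_val_le_val.mpr (by simp))
      have := (Finset.mem_Icc.mp (hs1 ⟨0, hn⟩)).1
      simp only [Fin.val_mk] at *
      omega
    funext t
    dsimp only
    simp only [Equiv.symm_apply_apply]
    have h1 := hzero t
    have h3 := hDle t
    omega

end Aux6

/-- under the partitionability conditions (closure under directed refinement and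
unique coarsest elements) the `h*`-vector of `χ_S` is non-negative: there exist natural numbers
`h*_i` with `χ_S(k) = Σ_{i=1}^n h*_i · C(k+n−i, n)`. -/
theorem hstar_nonneg {n : ℕ} (S : SForm n)
    (A : Set (OSP n)) (hA : A = {Φ : OSP n | Φ.solves S})
    (hclosed : ∀ Φ ∈ A, ∀ Ψ : OSP n, dirRef Φ Ψ → Ψ ∈ A)
    (hcoarse : ∀ Φ ∈ A, ∃! Φc : OSP n,
      Φc ∈ A ∧ dirRef Φc Φ ∧ ∀ Ψ ∈ A, dirRef Ψ Φ → dirRef Φc Ψ) :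
    ∃ hstar : ℕ → ℕ, ∀ k : ℕ, 1 ≤ k →
      schedCount S k = ∑ i ∈ Finset.Icc 1 n, hstar i * (k + n - i).choose n := by
  classical
  rcases Nat.eq_zero_or_pos n with rfl | hn
  · exact (sform_zero S).elim
  -- the coarsening map
  set co : OSP n → OSP n := fun Φ => if h : Φ ∈ A then (hcoarse Φ h).exists.choose else Φ
    with hco
  have hcoSpec : ∀ Φ, ∀ h : Φ ∈ A, co Φ ∈ A ∧ dirRef (co Φ) Φ ∧
      ∀ X ∈ A, dirRef X Φ → dirRef (co Φ) X := by
    intro Φ h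
    have hspec := (hcoarse Φ h).exists.choose_spec
    simp only [hco, dif_pos h]
    exact hspec
  set Coarse : OSP n → Prop := fun Ψ => Ψ ∈ A ∧ ∀ X ∈ A, dirRef X Ψ → dirRef Ψ X
    with hCoarse
  have hcoCoarse : ∀ Φ, ∀ h : Φ ∈ A, Coarse (co Φ) := by
    intro Φ h
    refine ⟨(hcoSpec Φ h).1, fun X hX hXco => ?_⟩
    exact (hcoSpec Φ h).2.2 X hX (Relation.ReflTransGen.trans hXco (hcoSpec Φ h).2.1)
  have hcoEq : ∀ Ψ, Coarse Ψ → ∀ Φ, ∀ h : Φ ∈ A, dirRef Ψ Φ → co Φ = Ψ := by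
    intro Ψ hΨ Φ h href
    have h1 : dirRef (co Φ) Ψ := (hcoSpec Φ h).2.2 Ψ hΨ.1 href
    have h2 : dirRef Ψ (co Φ) := hΨ.2 (co Φ) (hcoSpec Φ h).1 h1
    exact (dirRef_antisymm h2 (dirRef_length_le h1)).symm
  -- membership of order classes in A
  have hospA : ∀ a : Fin n → ℕ, (ospOf a ∈ A ↔ S.eval a = true) := by
    intro a
    rw [hA]
    simp only [Set.mem_setOf_eq]
    constructor
    · intro h
      exact h a (delta_ospOf a)
    · intro h b hb
      obtain ⟨g, hg, hgc⟩ := hb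
      obtain ⟨f0, hf0, hf0c⟩ := delta_ospOf a
      have hgf : ∀ i, g i = f0 i := fun i => (ospOf a).mem_unique (hg i) (hf0 i)
      rw [← h]
      refine eval_congr S (fun i j => ?_)
      rw [hgc i j, hf0c i j, hgf i, hgf j]
  -- canonical representatives
  have hrep : ∀ Ψ : OSP n, Ψ ∈ A → ∃ a : Fin n → ℕ,
      (∀ i, a i ∈ Finset.Icc 1 n) ∧ ospOf a = Ψ ∧ S.eval a = true := by
    intro Ψ hΨ
    refine ⟨fun i => (Ψ.idx i : ℕ) + 1, ?_, ?_, ?_⟩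
    · intro i
      dsimp only
      rw [Finset.mem_Icc]
      have h1 := (Ψ.idx i).isLt
      have h2 := Ψ.length_le
      omega
    · exact delta_unique (delta_ospOf _)
        ⟨Ψ.idx, Ψ.idx_mem, fun i j => by dsimp only; omega⟩
    · rw [hA] at hΨ
      exact hΨ _ ⟨Ψ.idx, Ψ.idx_mem, fun i j => by dsimp only; omega⟩
  -- the finite set of coarsest classes
  set T : Finset (OSP n) :=
    ((Fintype.piFinset fun _ : Fin n => Finset.Icc 1 n).filter
      fun a => S.eval a = true).image (fun a => co (ospOf a)) with hT
  have hTprop : ∀ Ψ ∈ T, Coarse Ψ ∧ Ψ ∈ A := by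
    intro Ψ hΨ
    rw [hT, Finset.mem_image] at hΨ
    obtain ⟨a, ha, rfl⟩ := hΨ
    rw [Finset.mem_filter] at ha
    have hmem : ospOf a ∈ A := (hospA a).mpr ha.2
    exact ⟨hcoCoarse _ hmem, (hcoSpec _ hmem).1⟩
  have hTfull : ∀ Ψ : OSP n, Coarse Ψ → Ψ ∈ T := by
    intro Ψ hΨ
    obtain ⟨a, hab, haosp, haev⟩ := hrep Ψ hΨ.1
    rw [hT, Finset.mem_image]
    refine ⟨a, ?_, ?_⟩
    · rw [Finset.mem_filter, Fintype.mem_piFinset]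
      exact ⟨hab, haev⟩
    · rw [haosp]
      exact hcoEq Ψ hΨ Ψ hΨ.1 Relation.ReflTransGen.refl
  refine ⟨fun i => (T.filter (fun Ψ => Ψ.blocks.length = i)).card, ?_⟩
  intro k hk
  -- fiber decomposition
  have hmaps : ∀ a ∈ (Fintype.piFinset fun _ : Fin n => Finset.Icc 1 k).filter
      (fun a => S.eval a = true), co (ospOf a) ∈ T := by
    intro a ha
    rw [Finset.mem_filter] at ha
    have hmem : ospOf a ∈ A := (hospA a).mpr ha.2
    exact hTfull _ (hcoCoarse _ hmem)
  have hstep1 : schedCount S k = ∑ Ψ ∈ T,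
      (((Fintype.piFinset fun _ : Fin n => Finset.Icc 1 k).filter
        (fun a => S.eval a = true)).filter (fun a => co (ospOf a) = Ψ)).card := by
    unfold schedCount
    rw [Finset.card_eq_sum_card_fiberwise hmaps]
  -- identify fibers with compatibility sets
  have hstep2 : ∀ Ψ ∈ T,
      (((Fintype.piFinset fun _ : Fin n => Finset.Icc 1 k).filter
        (fun a => S.eval a = true)).filter (fun a => co (ospOf a) = Ψ))
      = ((Fintype.piFinset fun _ : Fin n => Finset.Icc 1 k).filter
        (fun a => Compat Ψ a)) := by
    intro Ψ hΨ
    obtain ⟨hΨc, hΨA⟩ := hTprop Ψ hΨ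
    ext a
    rw [Finset.mem_filter, Finset.mem_filter, Finset.mem_filter]
    constructor
    · rintro ⟨⟨hbox, hev⟩, hcoa⟩
      have hmem : ospOf a ∈ A := (hospA a).mpr hev
      have hdref : dirRef Ψ (ospOf a) := by
        rw [← hcoa]
        exact (hcoSpec _ hmem).2.1
      exact ⟨hbox, compat_of_dirRef hdref (compat_ospOf a)⟩
    · rintro ⟨hbox, hcompat⟩
      have hdref : dirRef Ψ (ospOf a) := dirRef_of_compat Ψ hcompat
      have hmem : ospOf a ∈ A := hclosed Ψ hΨA (ospOf a) hdref
      exact ⟨⟨hbox, (hospA a).mp hmem⟩, hcoEq Ψ hΨc (ospOf a) hmem hdref⟩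
  have hstep3 : schedCount S k = ∑ Ψ ∈ T, (k + n - Ψ.blocks.length).choose n := by
    rw [hstep1]
    refine Finset.sum_congr rfl (fun Ψ hΨ => ?_)
    rw [hstep2 Ψ hΨ]
    exact card_compat Ψ hn k
  rw [hstep3]
  -- regroup by number of blocks
  have hmaps2 : ∀ Ψ ∈ T, Ψ.blocks.length ∈ Finset.Icc 1 n := by
    intro Ψ hΨ
    rw [Finset.mem_Icc]
    exact ⟨Ψ.length_pos hn, Ψ.length_le⟩
  rw [← Finset.sum_fiberwise_of_maps_to hmaps2 (fun Ψ => (k + n - Ψ.blocks.length).choose n)]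
  refine Finset.sum_congr rfl (fun i hi => ?_)
  have hconst : ∀ Ψ ∈ T.filter (fun Ψ => Ψ.blocks.length = i),
      (k + n - Ψ.blocks.length).choose n = (k + n - i).choose n := by
    intro Ψ hΨ
    rw [(Finset.mem_filter.mp hΨ).2]
  rw [Finset.sum_congr rfl hconst, Finset.sum_const, smul_eq_mul]
end

section
/- The map sending a ∈ (0,1]^n ∩ (1/k)ℤ^n with order class Φ (an ordered set partition with ℓ blocks) to its block values gives a bijection between lattice points of the k-th dilate of the half-open simplex C(Φ) ∩ (0,1]^n and strictly increasing ℓ-tuples in [k]; hence ehr_{C(Φ)∩(0,1]^n}(k) = C(k, ℓ). -/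
namespace OSP
variable {n : ℕ} (Φ : OSP n)

lemma block_unique {i : Fin n} {m m' : Fin Φ.blocks.length}
    (h : i ∈ Φ.blocks.get m) (h' : i ∈ Φ.blocks.get m') : m = m' := by
  by_contra hne
  rcases lt_or_gt_of_ne hne with hlt | hlt
  · exact Finset.disjoint_left.mp (List.pairwise_iff_get.mp Φ.pairwiseDisjoint m m' hlt) h h'
  · exact Finset.disjoint_left.mp (List.pairwise_iff_get.mp Φ.pairwiseDisjoint m' m hlt) h' h

lemma exists_idx_s16 (i : Fin n) : ∃ m : Fin Φ.blocks.length, i ∈ Φ.blocks.get m := by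
  obtain ⟨B, hB, hi⟩ := Φ.cover i
  obtain ⟨m, hm⟩ := List.get_of_mem hB
  exact ⟨m, hm ▸ hi⟩

noncomputable def bidx (i : Fin n) : Fin Φ.blocks.length := (Φ.exists_idx_s16 i).choose

lemma bidx_mem (i : Fin n) : i ∈ Φ.blocks.get (Φ.bidx i) := (Φ.exists_idx_s16 i).choose_spec

lemma bidx_eq {i : Fin n} {m : Fin Φ.blocks.length} (h : i ∈ Φ.blocks.get m) :
    Φ.bidx i = m := Φ.block_unique (Φ.bidx_mem i) h

noncomputable def rep (m : Fin Φ.blocks.length) : Fin n :=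
  (Φ.nonempty _ (Φ.blocks.get_mem m)).choose

lemma rep_mem (m : Fin Φ.blocks.length) : Φ.rep m ∈ Φ.blocks.get m :=
  (Φ.nonempty _ (Φ.blocks.get_mem m)).choose_spec

lemma bidx_rep (m : Fin Φ.blocks.length) : Φ.bidx (Φ.rep m) = m := Φ.bidx_eq (Φ.rep_mem m)

lemma delta_iff_bidx (a : Fin n → ℕ) :
    Φ.delta a ↔ ∀ i j, a i ≤ a j ↔ (Φ.bidx i : ℕ) ≤ Φ.bidx j := by
  constructor
  · rintro ⟨idx, hmem, hord⟩ i j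
    rw [hord i j, Φ.bidx_eq (hmem i), Φ.bidx_eq (hmem j)]
  · intro h
    exact ⟨Φ.bidx, Φ.bidx_mem, h⟩

end OSP

/-- The main equivalence: lattice points with order class `Φ` correspond to strictly
increasing tuples of block values. -/
noncomputable def blockEquiv {n ℓ : ℕ} (Φ : OSP n) (hl : Φ.blocks.length = ℓ) (k : ℕ) :
    {a : Fin n → ℕ // (∀ i, a i ∈ Finset.Icc 1 k) ∧ Φ.delta a} ≃
      {v : Fin ℓ → ℕ // StrictMono v ∧ ∀ m, v m ∈ Finset.Icc 1 k} where
  toFun a := ⟨fun m => a.1 (Φ.rep (Fin.cast hl.symm m)), by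
    obtain ⟨a, ha, hd⟩ := a
    have hb := (Φ.delta_iff_bidx a).mp hd
    refine ⟨fun m m' hmm' => ?_, fun m => ha _⟩
    have h1 : ¬ a (Φ.rep (Fin.cast hl.symm m')) ≤ a (Φ.rep (Fin.cast hl.symm m)) := by
      rw [hb, Φ.bidx_rep, Φ.bidx_rep]
      simp only [Fin.coe_cast]
      exact Nat.not_le.mpr hmm'
    exact Nat.not_le.mp h1⟩
  invFun v := ⟨fun i => v.1 (Fin.cast hl (Φ.bidx i)), by
    obtain ⟨v, hv, hvk⟩ := v
    refine ⟨fun i => hvk _, ?_⟩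
    rw [Φ.delta_iff_bidx]
    intro i j
    rw [hv.le_iff_le]
    exact Iff.rfl⟩
  left_inv a := by
    obtain ⟨a, ha, hd⟩ := a
    have hb := (Φ.delta_iff_bidx a).mp hd
    ext i
    simp only
    have hc : Fin.cast hl.symm (Fin.cast hl (Φ.bidx i)) = Φ.bidx i := by ext; simp
    rw [hc]
    exact le_antisymm ((hb _ _).mpr (by simp [Φ.bidx_rep]))
      ((hb _ _).mpr (by simp [Φ.bidx_rep]))
  right_inv v := by
    obtain ⟨v, hv, hvk⟩ := v
    ext m
    simp only [Φ.bidx_rep]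
    congr 1

lemma blockEquiv_spec {n ℓ : ℕ} (Φ : OSP n) (hl : Φ.blocks.length = ℓ) (k : ℕ)
    (a : {a : Fin n → ℕ // (∀ i, a i ∈ Finset.Icc 1 k) ∧ Φ.delta a}) (m : Fin ℓ) (i : Fin n)
    (h : i ∈ Φ.blocks.get (Fin.cast hl.symm m)) :
    (blockEquiv Φ hl k a : Fin ℓ → ℕ) m = (a : Fin n → ℕ) i := by
  obtain ⟨a, ha, hd⟩ := a
  have hb := (Φ.delta_iff_bidx a).mp hd
  show a (Φ.rep (Fin.cast hl.symm m)) = a i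
  exact le_antisymm ((hb _ _).mpr (by rw [Φ.bidx_rep, Φ.bidx_eq h]))
    ((hb _ _).mpr (by rw [Φ.bidx_rep, Φ.bidx_eq h]))

/-- Helper: shift a bounded tuple to `Fin k`. -/
def toFinTuple {ℓ : ℕ} (k : ℕ) (v : Fin ℓ → ℕ) (hv : ∀ m, v m ∈ Finset.Icc 1 k)
    (m : Fin ℓ) : Fin k :=
  ⟨v m - 1, by have := hv m; simp only [Finset.mem_Icc] at this; omega⟩

/-- Strictly increasing bounded tuples correspond to `ℓ`-subsets of `Fin k`. -/
noncomputable def tupleEquiv (ℓ k : ℕ) :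
    {v : Fin ℓ → ℕ // StrictMono v ∧ ∀ m, v m ∈ Finset.Icc 1 k} ≃
      {s : Finset (Fin k) // s.card = ℓ} where
  toFun v := ⟨Finset.univ.image (toFinTuple k v.1 v.2.2), by
    rw [Finset.card_image_of_injective _ (fun m m' h => ?_), Finset.card_univ,
      Fintype.card_fin]
    have h1 := v.2.2 m; have h2 := v.2.2 m'
    simp only [Finset.mem_Icc] at h1 h2
    have hval := congrArg Fin.val h
    simp only [toFinTuple] at hval
    exact v.2.1.injective (by omega)⟩
  invFun s := ⟨fun m => (s.1.orderEmbOfFin s.2 m : ℕ) + 1, by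
    constructor
    · intro m m' h
      have := (s.1.orderEmbOfFin s.2).strictMono h
      simp only [Fin.lt_def] at this
      show (s.1.orderEmbOfFin s.2 m : ℕ) + 1 < (s.1.orderEmbOfFin s.2 m' : ℕ) + 1
      omega
    · intro m
      simp only [Finset.mem_Icc]
      have := (s.1.orderEmbOfFin s.2 m).isLt
      omega⟩
  left_inv v := by
    obtain ⟨v, hv, hvk⟩ := v
    have hmono : StrictMono (toFinTuple k v hvk) := by
      intro m m' h
      have h1 := hvk m; have h2 := hvk m'
      simp only [Finset.mem_Icc] at h1 h2
      have := hv h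
      simp only [toFinTuple, Fin.mk_lt_mk]
      omega
    have hcard : (Finset.univ.image (toFinTuple k v hvk)).card = ℓ := by
      rw [Finset.card_image_of_injective _ hmono.injective, Finset.card_univ,
        Fintype.card_fin]
    have key := Finset.orderEmbOfFin_unique hcard
      (f := toFinTuple k v hvk)
      (fun m => Finset.mem_image_of_mem _ (Finset.mem_univ m)) hmono
    ext m
    simp only
    rw [show ((Finset.univ.image (toFinTuple k v hvk)).orderEmbOfFin hcard : Fin ℓ → Fin k)
        = toFinTuple k v hvk from key.symm]
    have := hvk m
    simp only [Finset.mem_Icc] at this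
    simp only [toFinTuple]
    omega
  right_inv s := by
    obtain ⟨s, hs⟩ := s
    ext x
    simp only [Finset.mem_image, Finset.mem_univ, true_and]
    constructor
    · rintro ⟨m, rfl⟩
      have : toFinTuple k (fun m => (s.orderEmbOfFin hs m : ℕ) + 1)
          (fun m => by simp only [Finset.mem_Icc]
                       have := (s.orderEmbOfFin hs m).isLt; omega) m
          = s.orderEmbOfFin hs m := by
        ext
        simp [toFinTuple]
      rw [this]
      exact Finset.orderEmbOfFin_mem s hs m
    · intro hx
      have : x ∈ Set.range (s.orderEmbOfFin hs) := by
        rw [Finset.range_orderEmbOfFin]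
        exact hx
      obtain ⟨m, hm⟩ := this
      refine ⟨m, ?_⟩
      ext
      simp [toFinTuple, hm]

/-- sending a lattice point of the `k`-th dilate of the half-open simplex
`C(Φ) ∩ (0,1]^n` (i.e. an `a ∈ [k]^n` with order class `Φ`) to its block values is a bijection
onto the strictly increasing `ℓ`-tuples in `[k]`; hence the Ehrhart function is `C(k,ℓ)`. -/
theorem ehrhart_braid_cone {n ℓ : ℕ} (Φ : OSP n) (hl : Φ.blocks.length = ℓ) (k : ℕ) :
    (∃ e : {a : Fin n → ℕ // (∀ i, a i ∈ Finset.Icc 1 k) ∧ Φ.delta a} ≃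
        {v : Fin ℓ → ℕ // StrictMono v ∧ ∀ m, v m ∈ Finset.Icc 1 k},
      ∀ a, ∀ m : Fin ℓ, ∀ i : Fin n,
        i ∈ Φ.blocks.get (Fin.cast hl.symm m) → (e a : Fin ℓ → ℕ) m = (a : Fin n → ℕ) i) ∧
    {a : Fin n → ℕ | (∀ i, a i ∈ Finset.Icc 1 k) ∧ Φ.delta a}.ncard = k.choose ℓ := by
  refine ⟨⟨blockEquiv Φ hl k, fun a m i h => blockEquiv_spec Φ hl k a m i h⟩, ?_⟩
  rw [← Nat.card_coe_set_eq]
  have : Nat.card {a : Fin n → ℕ // (∀ i, a i ∈ Finset.Icc 1 k) ∧ Φ.delta a}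
      = k.choose ℓ := by
    rw [Nat.card_congr ((blockEquiv Φ hl k).trans (tupleEquiv ℓ k)),
      Nat.card_eq_fintype_card, Fintype.card_finset_len, Fintype.card_fin]
  exact this
end
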